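/- For any two qubit density matrices ρ₁, ρ₂ there exists a 2×2 unitary matrix U such that (1/2)·ρ₁ + (1/2)·U ρ₁ U† = (1/2)·ρ₂ + (1/2)·U ρ₂ U†. (One bit of key suffices to encrypt any set of two qubit states: the channel ρ ↦ (1/2)ρ + (1/2)UρU† with U the rotation by 180 degrees about the axis through the output state sends both plaintexts to the same ciphertext state.) -/

import Mathlib

open Matrix ComplexOrder

theorem stmt_7 (ρ1 ρ2 : Matrix (Fin 2) (Fin 2) ℂ)
    (h1 : ρ1.PosSemidef) (t1 : ρ1.trace = 1)
    (h2 : ρ2.PosSemidef) (t2 : ρ2.trace = 1) :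
    ∃ U : Matrix (Fin 2) (Fin 2) ℂ, U ∈ Matrix.unitaryGroup (Fin 2) ℂ ∧
      (1/2 : ℂ) • ρ1 + (1/2 : ℂ) • (U * ρ1 * Uᴴ) =
      (1/2 : ℂ) • ρ2 + (1/2 : ℂ) • (U * ρ2 * Uᴴ) := by
  set b : ℂ := ρ1 0 1 - ρ2 0 1 with hb
  set w : ℂ := if b = 0 then 1 else b / ((‖b‖ : ℝ) : ℂ) with hwdef
  have hww : w * (starRingEnd ℂ) w = 1 := by
    by_cases h : b = 0
    · simp [hwdef, h]
    · rw [hwdef, if_neg h]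
      have habs : ((‖b‖ : ℝ) : ℂ) ≠ 0 := by
        simpa using (norm_ne_zero_iff.mpr h)
      rw [map_div₀, Complex.conj_ofReal]
      field_simp
      rw [Complex.mul_conj]
      norm_cast
      rw [← Complex.sq_norm]
  have hwb : w * (starRingEnd ℂ) b = b * (starRingEnd ℂ) w := by
    by_cases h : b = 0
    · simp [h]
    · rw [hwdef, if_neg h, map_div₀, Complex.conj_ofReal]
      ring
  -- e1, e2 : hermiticity relations
  have e1 : ρ1 1 0 = (starRingEnd ℂ) (ρ1 0 1) := by
    have := h1.1
    rw [Matrix.IsHermitian] at this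
    have := congrFun (congrFun this 1) 0
    simpa [Matrix.conjTranspose_apply] using this.symm
  have e2 : ρ2 1 0 = (starRingEnd ℂ) (ρ2 0 1) := by
    have := h2.1
    rw [Matrix.IsHermitian] at this
    have := congrFun (congrFun this 1) 0
    simpa [Matrix.conjTranspose_apply] using this.symm
  have tr1 : ρ1 0 0 + ρ1 1 1 = 1 := by
    rw [← Matrix.trace_fin_two]; exact t1
  have tr2 : ρ2 0 0 + ρ2 1 1 = 1 := by
    rw [← Matrix.trace_fin_two]; exact t2
  have hwb2 : w * w * ((starRingEnd ℂ) (ρ1 0 1) - (starRingEnd ℂ) (ρ2 0 1))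
      = ρ1 0 1 - ρ2 0 1 := by
    have hcb : (starRingEnd ℂ) b = (starRingEnd ℂ) (ρ1 0 1) - (starRingEnd ℂ) (ρ2 0 1) := by
      rw [hb]; exact map_sub _ _ _
    calc w * w * ((starRingEnd ℂ) (ρ1 0 1) - (starRingEnd ℂ) (ρ2 0 1))
        = w * (w * (starRingEnd ℂ) b) := by rw [hcb]; ring
      _ = b * (w * (starRingEnd ℂ) w) := by rw [hwb]; ring
      _ = b := by rw [hww, mul_one]
  have hwb3 : (starRingEnd ℂ) w * (starRingEnd ℂ) w * (ρ1 0 1 - ρ2 0 1)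
      = (starRingEnd ℂ) (ρ1 0 1) - (starRingEnd ℂ) (ρ2 0 1) := by
    have hcb : (starRingEnd ℂ) b = (starRingEnd ℂ) (ρ1 0 1) - (starRingEnd ℂ) (ρ2 0 1) := by
      rw [hb]; exact map_sub _ _ _
    have h' : (starRingEnd ℂ) w * b = (starRingEnd ℂ) b * w := by
      have := congrArg (starRingEnd ℂ) hwb
      simpa [_root_.map_mul, Complex.conj_conj] using this
    calc (starRingEnd ℂ) w * (starRingEnd ℂ) w * (ρ1 0 1 - ρ2 0 1)
        = (starRingEnd ℂ) w * ((starRingEnd ℂ) w * b) := by rw [hb]; ring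
      _ = (starRingEnd ℂ) b * (w * (starRingEnd ℂ) w) := by rw [h']; ring
      _ = (starRingEnd ℂ) b := by rw [hww, mul_one]
      _ = _ := hcb
  refine ⟨!![0, w; -(starRingEnd ℂ) w, 0], ?_, ?_⟩
  · rw [Matrix.mem_unitaryGroup_iff]
    ext i j
    fin_cases i <;> fin_cases j <;>
      simp [Matrix.mul_apply, Fin.sum_univ_two, Matrix.conjTranspose_apply,
        Matrix.star_apply] <;>
      linear_combination hww
  · ext i j
    fin_cases i <;> fin_cases j <;>
      simp [Matrix.mul_apply, Fin.sum_univ_two, Matrix.conjTranspose_apply, Matrix.vecMul,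
        dotProduct] <;>
      [skip; skip; skip; skip]
    · linear_combination (2⁻¹ * ρ1 1 1 - 2⁻¹ * ρ2 1 1) * hww +
        2⁻¹ * tr1 - 2⁻¹ * tr2
    · linear_combination (-(2⁻¹ : ℂ) * w * w) * e1 + (2⁻¹ : ℂ) * w * w * e2 -
        (2⁻¹ : ℂ) * hwb2
    · linear_combination (2⁻¹ : ℂ) * e1 - (2⁻¹ : ℂ) * e2 - (2⁻¹ : ℂ) * hwb3
    · linear_combination (2⁻¹ * ρ1 0 0 - 2⁻¹ * ρ2 0 0) * hww +
        2⁻¹ * tr1 - 2⁻¹ * tr2
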